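/- Let f have L-Lipschitz gradient and let iterates satisfy x^{k+1} = x^k + Δ^k, with the stale read satisfying ‖x^k − x̂^k‖ ≤ ∑_{d=k−ε}^{k−1} ‖Δ^d‖ for a delay bound ε. Then for any η > 0, ⟨∇f(x^k) − ∇f(x̂^k), Δ^k⟩ ≤ ∑_{i=k−ε}^{k−1} (L/(2η))‖Δⁱ‖² + (ε η L / 2)‖Δ^k‖². -/

import Mathlib

theorem delay_mismatch_bound (n : ℕ) (f : EuclideanSpace ℝ (Fin n) → ℝ)
    (f' : EuclideanSpace ℝ (Fin n) → EuclideanSpace ℝ (Fin n)) (L : ℝ) (hL : 0 < L)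
    (hgrad : ∀ x, HasGradientAt f (f' x) x)
    (hLip : ∀ x y, ‖f' x - f' y‖ ≤ L * ‖x - y‖)
    (x xhat Δ : ℕ → EuclideanSpace ℝ (Fin n)) (ε : ℕ) (hε : 1 ≤ ε)
    (hstep : ∀ k, x (k + 1) = x k + Δ k)
    (hdelay : ∀ k, ‖x k - xhat k‖ ≤ ∑ d ∈ Finset.Icc (k - ε) (k - 1), ‖Δ d‖)
    (η : ℝ) (hη : 0 < η) (k : ℕ) (hk : ε ≤ k) :
    (inner ℝ (f' (x k) - f' (xhat k)) (Δ k) : ℝ) ≤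
      (∑ i ∈ Finset.Icc (k - ε) (k - 1), (L / (2 * η)) * ‖Δ i‖ ^ 2) +
        ((ε : ℝ) * η * L / 2) * ‖Δ k‖ ^ 2 := by
  have h1 : (inner ℝ (f' (x k) - f' (xhat k)) (Δ k) : ℝ) ≤
      ‖f' (x k) - f' (xhat k)‖ * ‖Δ k‖ := real_inner_le_norm _ _
  have h2 : ‖f' (x k) - f' (xhat k)‖ * ‖Δ k‖ ≤ (L * ‖x k - xhat k‖) * ‖Δ k‖ :=
    mul_le_mul_of_nonneg_right (hLip _ _) (norm_nonneg _)
  have h3 : (L * ‖x k - xhat k‖) * ‖Δ k‖ ≤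
      (L * ∑ d ∈ Finset.Icc (k - ε) (k - 1), ‖Δ d‖) * ‖Δ k‖ := by
    apply mul_le_mul_of_nonneg_right _ (norm_nonneg _)
    exact mul_le_mul_of_nonneg_left (hdelay k) hL.le
  have hcard : (Finset.Icc (k - ε) (k - 1)).card = ε := by
    rw [Nat.card_Icc]; omega
  have h4 : (L * ∑ d ∈ Finset.Icc (k - ε) (k - 1), ‖Δ d‖) * ‖Δ k‖ =
      ∑ d ∈ Finset.Icc (k - ε) (k - 1), L * ‖Δ d‖ * ‖Δ k‖ := by
    rw [Finset.mul_sum, Finset.sum_mul]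
  have h5 : ∑ d ∈ Finset.Icc (k - ε) (k - 1), L * ‖Δ d‖ * ‖Δ k‖ ≤
      ∑ d ∈ Finset.Icc (k - ε) (k - 1),
        ((L / (2 * η)) * ‖Δ d‖ ^ 2 + (η * L / 2) * ‖Δ k‖ ^ 2) := by
    apply Finset.sum_le_sum
    intro d _
    have h := mul_nonneg (div_nonneg hL.le (by positivity : (0:ℝ) ≤ 2 * η))
      (sq_nonneg (‖Δ d‖ - η * ‖Δ k‖))
    have expand : L / (2 * η) * (‖Δ d‖ - η * ‖Δ k‖) ^ 2 =
        L / (2 * η) * ‖Δ d‖ ^ 2 - L * ‖Δ d‖ * ‖Δ k‖ + η * L / 2 * ‖Δ k‖ ^ 2 := by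
      field_simp
      ring
    linarith [expand ▸ h]
  have h6 : ∑ d ∈ Finset.Icc (k - ε) (k - 1),
      ((L / (2 * η)) * ‖Δ d‖ ^ 2 + (η * L / 2) * ‖Δ k‖ ^ 2) =
      (∑ i ∈ Finset.Icc (k - ε) (k - 1), (L / (2 * η)) * ‖Δ i‖ ^ 2) +
        ((ε : ℝ) * η * L / 2) * ‖Δ k‖ ^ 2 := by
    rw [Finset.sum_add_distrib, Finset.sum_const, hcard, nsmul_eq_mul]
    ring
  linarith [h1, h2, h3, h4 ▸ h3, h5, h6 ▸ h5]
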